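/- Let k ∈ ℕ, p ∈ (0,1), and consider the branching process with offspring distribution X = min(Y, k), where Y is geometric with P(Y=i)=(1-p)p^i (the (p,ξ)-MAE model with ξ ≡ k). The process survives with positive probability if and only if k > log(2p-1)/log(p) - 1; equivalently, if and only if p^{k+1} - 2p + 1 < 0. -/

import Mathlib

open scoped ENNReal

/-- Binomial thinning of a nonnegative-integer-valued distribution `ξ` with retention
probability `p`: given `ξ = n`, the result is `Binomial(n, p)`. -/
noncomputable def binThin (p : ℝ≥0∞) (hp : p ≤ 1) (ξ : PMF ℕ) : PMF ℕ :=
  ξ.bind fun n => (PMF.binomial p.toNNReal (by simpa using ENNReal.toNNReal_mono ENNReal.one_ne_top hp) n).map Fin.val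

/-- Mean of a `PMF` on `ℕ`. -/
noncomputable def pmfMean (μ : PMF ℕ) : ℝ≥0∞ := ∑' k : ℕ, (k : ℝ≥0∞) * μ k

/-- Tail probability `P(μ ≥ k)`. -/
noncomputable def pmfTail (μ : PMF ℕ) (k : ℕ) : ℝ≥0∞ := ∑' n : ℕ, if k ≤ n then μ n else 0

/-- Probability generating function of a `PMF` on `ℕ`. -/
noncomputable def pmfPgf (μ : PMF ℕ) (s : ℝ) : ℝ := ∑' k : ℕ, (μ k).toReal * s ^ k

/-- Distribution of the sum of `n` i.i.d. copies of `μ`. -/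
noncomputable def iidSum (μ : PMF ℕ) : ℕ → PMF ℕ
  | 0 => PMF.pure 0
  | n + 1 => (iidSum μ n).bind fun t => μ.map (t + ·)

/-- Distribution of the `n`-th generation of a Galton–Watson branching process with
offspring distribution `μ`, started from a single individual. -/
noncomputable def gwGen (μ : PMF ℕ) : ℕ → PMF ℕ
  | 0 => PMF.pure 1
  | n + 1 => (gwGen μ n).bind (iidSum μ)

/-- Extinction probability `P(⋃ₙ {Zₙ = 0})` of the Galton-Watson process:
the events `{Zₙ = 0}` are increasing, so this is `⨆ n, P(Zₙ = 0)`. -/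
noncomputable def extinctionProb (μ : PMF ℕ) : ℝ≥0∞ := ⨆ n, gwGen μ n 0

/-- Survival (non-extinction) probability of the Galton-Watson process. -/
noncomputable def survivalProb (μ : PMF ℕ) : ℝ≥0∞ := 1 - extinctionProb μ

/-- Expected total progeny `E(Σₙ Zₙ)` of the Galton-Watson process (by Tonelli this is
the sum of the means of the generation sizes). -/
noncomputable def progenyMean (μ : PMF ℕ) : ℝ≥0∞ := ∑' n : ℕ, pmfMean (gwGen μ n)

/-- The Riemann zeta function `ζ(γ) = Σ_{j ≥ 1} j^{-γ}` as a real series. -/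
noncomputable def zetaSum (γ : ℝ) : ℝ := ∑' n : ℕ, ((n : ℝ) + 1) ^ (-γ)

/-- The polylogarithm `Li_a(x) = Σ_{j ≥ 1} x^j / j^a`. -/
noncomputable def polylog (a x : ℝ) : ℝ := ∑' n : ℕ, x ^ (n + 1) / ((n : ℝ) + 1) ^ a


open Classical


noncomputable def pgfE (ν : PMF ℕ) (s : ℝ≥0∞) : ℝ≥0∞ := ∑' m, ν m * s ^ m

lemma pgfE_pure (a : ℕ) (s : ℝ≥0∞) : pgfE (PMF.pure a) s = s ^ a := by
  unfold pgfE
  rw [tsum_eq_single a]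
  · simp [PMF.pure_apply]
  · intro b hb; simp [PMF.pure_apply, hb]

lemma pgfE_bind (ν : PMF ℕ) (κ : ℕ → PMF ℕ) (s : ℝ≥0∞) :
    pgfE (ν.bind κ) s = ∑' t, ν t * pgfE (κ t) s := by
  unfold pgfE
  simp only [PMF.bind_apply]
  have h1 : ∀ m : ℕ, (∑' t, ν t * κ t m) * s ^ m = ∑' t, ν t * (κ t m * s ^ m) := by
    intro m; rw [← ENNReal.tsum_mul_right]; simp_rw [mul_assoc]
  rw [tsum_congr h1, ENNReal.tsum_comm]
  exact tsum_congr fun t => ENNReal.tsum_mul_left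

lemma pgfE_map_add (ν : PMF ℕ) (t : ℕ) (s : ℝ≥0∞) :
    pgfE (ν.map (t + ·)) s = s ^ t * pgfE ν s := by
  unfold pgfE
  have h1 : ∀ m : ℕ, (ν.map (t + ·)) m * s ^ m
      = ∑' y, (if m = t + y then ν y else 0) * s ^ m := by
    intro m; rw [PMF.map_apply, ← ENNReal.tsum_mul_right]
    exact tsum_congr fun y => by split <;> rfl
  rw [tsum_congr h1, ENNReal.tsum_comm]
  have h2 : ∀ y : ℕ, (∑' m, (if m = t + y then ν y else 0) * s ^ m) = s ^ t * (ν y * s ^ y) := by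
    intro y
    rw [tsum_eq_single (t + y)]
    · rw [if_pos rfl, pow_add]; ring
    · intro m hm; rw [if_neg hm, zero_mul]
  rw [tsum_congr h2, ENNReal.tsum_mul_left]

lemma pgfE_iidSum (μ : PMF ℕ) (t : ℕ) (s : ℝ≥0∞) :
    pgfE (iidSum μ t) s = (pgfE μ s) ^ t := by
  induction t with
  | zero => rw [show iidSum μ 0 = PMF.pure 0 from rfl, pgfE_pure, pow_zero, pow_zero]
  | succ n ih =>
      rw [show iidSum μ (n+1) = (iidSum μ n).bind fun t => μ.map (t + ·) from rfl, pgfE_bind]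
      have h1 : ∀ u : ℕ, iidSum μ n u * pgfE (μ.map (u + ·)) s
          = (iidSum μ n u * s ^ u) * pgfE μ s := by
        intro u; rw [pgfE_map_add]; ring
      rw [tsum_congr h1, ENNReal.tsum_mul_right,
        show (∑' u, iidSum μ n u * s ^ u) = pgfE (iidSum μ n) s from rfl, ih, ← pow_succ]

lemma pgfE_gwGen (μ : PMF ℕ) (n : ℕ) (s : ℝ≥0∞) :
    pgfE (gwGen μ n) s = (pgfE μ)^[n] s := by
  induction n generalizing s with
  | zero => rw [show gwGen μ 0 = PMF.pure 1 from rfl, pgfE_pure, pow_one,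
      Function.iterate_zero_apply]
  | succ n ih =>
      rw [show gwGen μ (n+1) = (gwGen μ n).bind (iidSum μ) from rfl, pgfE_bind]
      have h1 : ∀ t : ℕ, gwGen μ n t * pgfE (iidSum μ t) s = gwGen μ n t * (pgfE μ s) ^ t :=
        fun t => by rw [pgfE_iidSum]
      rw [tsum_congr h1,
        show (∑' t, gwGen μ n t * (pgfE μ s) ^ t) = pgfE (gwGen μ n) (pgfE μ s) from rfl,
        ih, Function.iterate_succ_apply]

lemma pgfE_zero (ν : PMF ℕ) : pgfE ν 0 = ν 0 := by
  unfold pgfE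
  rw [tsum_eq_single 0]
  · simp
  · intro m hm; simp [zero_pow hm]

lemma gwGen_zero_eq (μ : PMF ℕ) (n : ℕ) : gwGen μ n 0 = (pgfE μ)^[n] 0 := by
  rw [← pgfE_zero, pgfE_gwGen]

lemma pgfE_mono (μ : PMF ℕ) : Monotone (pgfE μ) := fun s t h =>
  ENNReal.tsum_le_tsum fun m => mul_le_mul_right (pow_le_pow_left' h m) _


noncomputable def maeG (p : ℝ) (k : ℕ) (x : ℝ) : ℝ :=
  (∑ j ∈ Finset.range k, (1 - p) * p ^ j * x ^ j) + p ^ k * x ^ k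

lemma geom_fact (x : ℝ) (k : ℕ) : (1 - x) * ∑ j ∈ Finset.range k, x ^ j = 1 - x ^ k := by
  linear_combination (-1 : ℝ) * geom_sum_mul x k

lemma maeG_nonneg {p : ℝ} (hp0 : 0 < p) (hp1 : p < 1) (k : ℕ) {x : ℝ} (hx : 0 ≤ x) :
    0 ≤ maeG p k x := by
  unfold maeG
  have h1 : (0:ℝ) ≤ 1 - p := by linarith
  refine add_nonneg (Finset.sum_nonneg fun j _ => ?_) ?_
  · exact mul_nonneg (mul_nonneg h1 (pow_nonneg hp0.le j)) (pow_nonneg hx j)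
  · exact mul_nonneg (pow_nonneg hp0.le k) (pow_nonneg hx k)

lemma maeG_mono {p : ℝ} (hp0 : 0 < p) (hp1 : p < 1) (k : ℕ) {x y : ℝ}
    (hx : 0 ≤ x) (hxy : x ≤ y) : maeG p k x ≤ maeG p k y := by
  unfold maeG
  have h1 : (0:ℝ) ≤ 1 - p := by linarith
  refine add_le_add (Finset.sum_le_sum fun j _ => ?_) ?_
  · exact mul_le_mul_of_nonneg_left (pow_le_pow_left₀ hx hxy j)
      (mul_nonneg h1 (pow_nonneg hp0.le j))
  · exact mul_le_mul_of_nonneg_left (pow_le_pow_left₀ hx hxy k) (pow_nonneg hp0.le k)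

lemma maeG_one {p : ℝ} (k : ℕ) : maeG p k 1 = 1 := by
  unfold maeG
  have h1 : ∑ j ∈ Finset.range k, (1 - p) * p ^ j * (1:ℝ) ^ j
      = (1 - p) * ∑ j ∈ Finset.range k, p ^ j := by
    rw [Finset.mul_sum]; exact Finset.sum_congr rfl fun j _ => by rw [one_pow, mul_one]
  rw [h1, geom_fact, one_pow, mul_one]; ring

lemma maeG_identity (p x : ℝ) (k : ℕ) :
    (1 - p * x) * (maeG p k x - x) = (1 - x) * (1 - p - p * x + p ^ (k+1) * x ^ k) := by
  have h : (∑ j ∈ Finset.range k, (p * x) ^ j) * (p * x - 1) = (p * x) ^ k - 1 :=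
    geom_sum_mul _ _
  have hg : maeG p k x = (1 - p) * (∑ j ∈ Finset.range k, (p * x) ^ j) + p ^ k * x ^ k := by
    rw [maeG, Finset.mul_sum]
    congr 1
    exact Finset.sum_congr rfl fun j _ => by rw [mul_pow]; ring
  rw [hg]
  linear_combination (p - 1) * h

lemma kpk_lt {p : ℝ} (hp0 : 0 < p) (hp1 : p < 1) {k : ℕ} (hk : 1 ≤ k)
    (h : 0 ≤ p ^ (k+1) - 2 * p + 1) : (k : ℝ) * p ^ k < 1 := by
  rcases eq_or_lt_of_le hk with hk1 | hk2
  · rw [← hk1]; simpa using hp1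
  · have h1p : (0:ℝ) < 1 - p := by linarith
    have hS : (k : ℝ) * p ^ (k-1) < ∑ j ∈ Finset.range k, p ^ j := by
      have hconst : ∑ _j ∈ Finset.range k, p ^ (k-1) = (k:ℝ) * p ^ (k-1) := by
        rw [Finset.sum_const, Finset.card_range, nsmul_eq_mul]
      rw [← hconst]
      refine Finset.sum_lt_sum (fun j hj => ?_) ⟨0, ?_, ?_⟩
      · exact pow_le_pow_of_le_one hp0.le hp1.le
          (by simp only [Finset.mem_range] at hj; omega)
      · simp only [Finset.mem_range]; omega
      · rw [pow_zero]; exact pow_lt_one₀ hp0.le hp1 (by omega)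
    have hgeom : (1 - p) * ∑ j ∈ Finset.range k, p ^ j = 1 - p ^ k := geom_fact p k
    have h2 : p * (1 - p ^ k) ≤ 1 - p := by nlinarith [pow_succ p k]
    have hpk : p * p ^ (k-1) = p ^ k := by
      rw [← pow_succ']; congr 1; omega
    have h3 := mul_lt_mul_of_pos_left hS (mul_pos hp0 h1p)
    have h4 : p * (1 - p) * ∑ j ∈ Finset.range k, p ^ j = p * (1 - p ^ k) := by
      rw [mul_assoc, hgeom]
    have h3' : (1 - p) * ((k:ℝ) * p ^ k) < p * (1 - p ^ k) := by
      calc (1 - p) * ((k:ℝ) * p ^ k) = p * (1 - p) * ((k:ℝ) * p ^ (k-1)) := by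
            rw [← hpk]; ring
        _ < p * (1 - p) * ∑ j ∈ Finset.range k, p ^ j := h3
        _ = p * (1 - p ^ k) := h4
    have h5 : (1 - p) * ((k:ℝ) * p ^ k) < (1 - p) * 1 := by rw [mul_one]; linarith
    exact (mul_lt_mul_iff_right₀ h1p).mp h5

lemma one_sub_pow_le {x : ℝ} (hx0 : 0 ≤ x) (hx1 : x ≤ 1) (k : ℕ) :
    1 - x ^ k ≤ (k:ℝ) * (1 - x) := by
  have hgeom := geom_fact x k
  have hS : ∑ j ∈ Finset.range k, x ^ j ≤ (k:ℝ) := by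
    calc ∑ j ∈ Finset.range k, x ^ j ≤ ∑ _j ∈ Finset.range k, (1:ℝ) :=
          Finset.sum_le_sum fun j _ => pow_le_one₀ hx0 hx1
      _ = k := by simp
  nlinarith [mul_le_mul_of_nonneg_left hS (by linarith : (0:ℝ) ≤ 1 - x)]

lemma phi_pos {p : ℝ} (hp0 : 0 < p) (hp1 : p < 1) {k : ℕ} (hk : 1 ≤ k)
    (h : 0 ≤ p ^ (k+1) - 2 * p + 1) {x : ℝ} (hx0 : 0 ≤ x) (hx1 : x < 1) :
    0 < 1 - p - p * x + p ^ (k+1) * x ^ k := by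
  have hkpk := kpk_lt hp0 hp1 hk h
  have hle := one_sub_pow_le hx0 hx1.le k
  have hp1k : (0:ℝ) < p ^ (k+1) := pow_pos hp0 (k+1)
  have hA : p ^ (k+1) = p ^ k * p := pow_succ p k
  have hmul' : p ^ (k+1) * (1 - x ^ k) ≤ (k:ℝ) * p ^ k * (p * (1 - x)) := by
    calc p ^ (k+1) * (1 - x ^ k) ≤ p ^ (k+1) * ((k:ℝ) * (1 - x)) :=
          mul_le_mul_of_nonneg_left hle hp1k.le
      _ = (k:ℝ) * p ^ k * (p * (1 - x)) := by rw [hA]; ring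
  have hpos : 0 < p * (1 - x) * (1 - (k:ℝ) * p ^ k) :=
    mul_pos (mul_pos hp0 (by linarith)) (by linarith)
  nlinarith [hmul', hpos]

lemma exists_fix {p : ℝ} (hp0 : 0 < p) (hp1 : p < 1) {k : ℕ} (hk : 1 ≤ k)
    (h : p ^ (k+1) - 2 * p + 1 < 0) :
    ∃ x : ℝ, 0 ≤ x ∧ x < 1 ∧ maeG p k x ≤ x := by
  have hp1k : (0:ℝ) < p ^ (k+1) := pow_pos hp0 (k+1)
  refine ⟨p ^ (k+1) - 2*p + 2, by nlinarith, by linarith, ?_⟩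
  set x := p ^ (k+1) - 2*p + 2 with hxdef
  have hx0 : 0 ≤ x := by rw [hxdef]; nlinarith
  have hx1 : x < 1 := by rw [hxdef]; linarith
  have hxk : x ^ k ≤ 1 := pow_le_one₀ hx0 hx1.le
  have hphi : 1 - p - p * x + p ^ (k+1) * x ^ k ≤ 0 := by
    have e1 : 0 ≤ p ^ (k+1) * (1 - x ^ k) := mul_nonneg hp1k.le (by linarith)
    have e2 : 0 ≤ (1 - p) * (1 - x) :=
      mul_nonneg (by linarith) (by linarith)
    rw [hxdef] at e1 e2 ⊢
    nlinarith [e1, e2]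
  have hid := maeG_identity p x k
  have hpx : p * x < 1 := by nlinarith [mul_nonneg (by linarith : (0:ℝ) ≤ 1 - p) hx0]
  by_contra hgt
  push_neg at hgt
  have hpos : 0 < (1 - p * x) * (maeG p k x - x) := mul_pos (by linarith) (by linarith)
  have hneg : (1 - x) * (1 - p - p * x + p ^ (k+1) * x ^ k) ≤ 0 := by
    nlinarith [mul_nonneg (by linarith : (0:ℝ) ≤ 1 - x) (neg_nonneg.2 hphi)]
  linarith [hid, hpos, hneg]

lemma mu_gt (k : ℕ) (Y : PMF ℕ) {j : ℕ} (hj : k < j) :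
    (Y.map fun y => min y k) j = 0 := by
  rw [PMF.map_apply, ENNReal.tsum_eq_zero]
  intro y
  exact if_neg (by omega)

lemma mu_lt {p : ℝ} (k : ℕ) (Y : PMF ℕ)
    (hY : ∀ i : ℕ, Y i = ENNReal.ofReal ((1 - p) * p ^ i))
    {j : ℕ} (hj : j < k) :
    (Y.map fun y => min y k) j = ENNReal.ofReal ((1 - p) * p ^ j) := by
  rw [PMF.map_apply]
  refine Eq.trans (tsum_eq_single j ?_) ?_
  · intro y hy; exact if_neg (by omega)
  · rw [if_pos (by omega : j = min j k), hY j]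

lemma mu_k {p : ℝ} (hp0 : 0 < p) (hp1 : p < 1) (k : ℕ) (Y : PMF ℕ)
    (hY : ∀ i : ℕ, Y i = ENNReal.ofReal ((1 - p) * p ^ i)) :
    (Y.map fun y => min y k) k = ENNReal.ofReal (p ^ k) := by
  rw [PMF.map_apply]
  have hinj : Function.Injective (fun i : ℕ => k + i) := add_right_injective k
  refine Eq.trans (hinj.tsum_eq ?_).symm ?_
  · intro x hx
    have hkx : k ≤ x := by
      by_contra hlt
      exact hx (if_neg (by omega))
    refine Set.mem_range.2 ⟨x - k, ?_⟩
    show k + (x - k) = x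
    omega
  · refine Eq.trans (tsum_congr fun i =>
      Eq.trans (if_pos (by omega : k = min (k + i) k)) (hY (k + i))) ?_
    have h1 : ∀ i : ℕ, ENNReal.ofReal ((1 - p) * p ^ (k + i))
        = ENNReal.ofReal ((1 - p) * p ^ k) * ENNReal.ofReal p ^ i := by
      intro i
      rw [pow_add, ← mul_assoc,
        ENNReal.ofReal_mul (mul_nonneg (by linarith) (pow_nonneg hp0.le k)),
        ENNReal.ofReal_pow hp0.le]
    rw [tsum_congr h1, ENNReal.tsum_mul_left, ENNReal.tsum_geometric]
    have h2 : (1 : ℝ≥0∞) - ENNReal.ofReal p = ENNReal.ofReal (1 - p) := by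
      rw [ENNReal.ofReal_sub 1 hp0.le, ENNReal.ofReal_one]
    rw [h2, ENNReal.ofReal_mul (by linarith : (0:ℝ) ≤ 1 - p),
      mul_comm (ENNReal.ofReal (1 - p)), mul_assoc, ENNReal.mul_inv_cancel
        (ENNReal.ofReal_pos.2 (by linarith)).ne' ENNReal.ofReal_ne_top, mul_one]

lemma pgfE_mu {p : ℝ} (hp0 : 0 < p) (hp1 : p < 1) (k : ℕ) (Y : PMF ℕ)
    (hY : ∀ i : ℕ, Y i = ENNReal.ofReal ((1 - p) * p ^ i)) {x : ℝ} (hx : 0 ≤ x) :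
    pgfE (Y.map fun y => min y k) (ENNReal.ofReal x) = ENNReal.ofReal (maeG p k x) := by
  unfold pgfE
  rw [tsum_eq_sum (s := Finset.range (k+1)) (fun j hj => by
    have hkj : k < j := by simp only [Finset.mem_range] at hj; omega
    rw [mu_gt k Y hkj, zero_mul])]
  rw [Finset.sum_range_succ]
  have h1 : ∀ j ∈ Finset.range k, (Y.map fun y => min y k) j * ENNReal.ofReal x ^ j
      = ENNReal.ofReal ((1 - p) * p ^ j * x ^ j) := by
    intro j hj
    rw [mu_lt k Y hY (Finset.mem_range.1 hj), ← ENNReal.ofReal_pow hx,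
      ← ENNReal.ofReal_mul (mul_nonneg (by linarith) (pow_nonneg hp0.le j))]
  rw [Finset.sum_congr rfl h1, mu_k hp0 hp1 k Y hY, ← ENNReal.ofReal_pow hx,
    ← ENNReal.ofReal_mul (pow_nonneg hp0.le k),
    ← ENNReal.ofReal_sum_of_nonneg (fun j _ =>
        mul_nonneg (mul_nonneg (by linarith) (pow_nonneg hp0.le j)) (pow_nonneg hx j)),
    ← ENNReal.ofReal_add (Finset.sum_nonneg fun j _ =>
        mul_nonneg (mul_nonneg (by linarith) (pow_nonneg hp0.le j)) (pow_nonneg hx j))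
      (mul_nonneg (pow_nonneg hp0.le k) (pow_nonneg hx k))]
  rfl

/-- the (p,ξ)-MAE branching process with `ξ ≡ k` (offspring `X = min(Y,k)`,
`Y` geometric with `P(Y=i)=(1-p)pⁱ`) survives with positive probability iff
`p^{k+1} - 2p + 1 < 0` (equivalently, `k > log(2p-1)/log p - 1`). -/
theorem mae_survival_const (k : ℕ) (hk : 1 ≤ k)
    (p : ℝ) (hp0 : 0 < p) (hp1 : p < 1)
    (Y : PMF ℕ) (hY : ∀ i : ℕ, Y i = ENNReal.ofReal ((1 - p) * p ^ i)) :
    0 < survivalProb (Y.map fun y => min y k) ↔ p ^ (k + 1) - 2 * p + 1 < 0 := by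
  set μ := Y.map fun y => min y k with hμdef
  have hq : ∀ n, gwGen μ n 0 = (pgfE μ)^[n] 0 := gwGen_zero_eq μ
  rcases lt_or_ge (p ^ (k + 1) - 2 * p + 1) 0 with hc | hc
  · obtain ⟨x, hx0, hx1, hgx⟩ := exists_fix hp0 hp1 hk hc
    have hfx : pgfE μ (ENNReal.ofReal x) ≤ ENNReal.ofReal x := by
      rw [hμdef, pgfE_mu hp0 hp1 k Y hY hx0]
      exact ENNReal.ofReal_le_ofReal hgx
    have hiter : ∀ n, (pgfE μ)^[n] 0 ≤ ENNReal.ofReal x := by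
      intro n; induction n with
      | zero => simp
      | succ n ih =>
          rw [Function.iterate_succ_apply']
          exact le_trans (pgfE_mono μ ih) hfx
    have hext : extinctionProb μ < 1 := by
      have h1 : extinctionProb μ ≤ ENNReal.ofReal x := by
        rw [extinctionProb]
        exact iSup_le fun n => (hq n) ▸ hiter n
      exact lt_of_le_of_lt h1 (by rwa [ENNReal.ofReal_lt_one])
    have hpos : 0 < survivalProb μ := by
      rw [survivalProb]; exact tsub_pos_iff_lt.2 hext
    exact iff_of_true hpos hc
  · set X : ℕ → ℝ := fun n => (maeG p k)^[n] 0 with hXdef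
    have hXsucc : ∀ n, X (n + 1) = maeG p k (X n) := fun n =>
      Function.iterate_succ_apply' (maeG p k) n 0
    have hbounds : ∀ n, 0 ≤ X n ∧ X n ≤ 1 := by
      intro n; induction n with
      | zero => simp [hXdef]
      | succ n ih =>
          rw [hXsucc n]
          exact ⟨maeG_nonneg hp0 hp1 k ih.1,
            le_trans (maeG_mono hp0 hp1 k ih.1 ih.2) (le_of_eq (maeG_one k))⟩
    have hbridge : ∀ n, (pgfE μ)^[n] 0 = ENNReal.ofReal (X n) := by
      intro n; induction n with
      | zero => simp [hXdef]
      | succ n ih =>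
          rw [Function.iterate_succ_apply', ih, hμdef,
            pgfE_mu hp0 hp1 k Y hY (hbounds n).1, ← hXsucc n]
    have hmono : Monotone X := by
      refine monotone_nat_of_le_succ ?_
      intro n; induction n with
      | zero =>
          rw [hXsucc 0]
          have h00 : X 0 = 0 := by simp [hXdef]
          rw [h00]
          exact maeG_nonneg hp0 hp1 k le_rfl
      | succ n ih =>
          calc X (n + 1) = maeG p k (X n) := hXsucc n
            _ ≤ maeG p k (X (n + 1)) := maeG_mono hp0 hp1 k (hbounds n).1 ih
            _ = X (n + 1 + 1) := (hXsucc (n + 1)).symm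
    have hbdd : BddAbove (Set.range X) := ⟨1, fun y hy => by
      obtain ⟨n, rfl⟩ := hy; exact (hbounds n).2⟩
    have htend : Filter.Tendsto X Filter.atTop (nhds (⨆ n, X n)) :=
      tendsto_atTop_ciSup hmono hbdd
    set L := ⨆ n, X n with hLdef
    have hL1 : L ≤ 1 := ciSup_le fun n => (hbounds n).2
    have hL0 : 0 ≤ L := by
      have h00 : X 0 = 0 := by simp [hXdef]
      have h01 := le_ciSup hbdd 0
      rw [h00] at h01
      exact h01
    have hcont : Continuous (maeG p k) := by
      unfold maeG
      exact (continuous_finset_sum _ fun j _ => continuous_const.mul (continuous_pow j)).add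
        (continuous_const.mul (continuous_pow k))
    have hfixL : maeG p k L = L := by
      have h1 : Filter.Tendsto (fun n => X (n + 1)) Filter.atTop (nhds L) :=
        htend.comp (Filter.tendsto_add_atTop_nat 1)
      have h2 : Filter.Tendsto (fun n => maeG p k (X n)) Filter.atTop (nhds (maeG p k L)) :=
        (hcont.tendsto L).comp htend
      have h3 : (fun n => X (n + 1)) = fun n => maeG p k (X n) := funext hXsucc
      rw [h3] at h1
      exact tendsto_nhds_unique h2 h1
    have hLeq : L = 1 := by
      by_contra hne
      have hlt : L < 1 := lt_of_le_of_ne hL1 hne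
      have hphi := phi_pos hp0 hp1 hk hc hL0 hlt
      have hid := maeG_identity p L k
      rw [hfixL, sub_self, mul_zero] at hid
      have hposs : 0 < (1 - L) * (1 - p - p * L + p ^ (k + 1) * L ^ k) :=
        mul_pos (by linarith) hphi
      rw [← hid] at hposs
      exact lt_irrefl 0 hposs
    have hsurv : survivalProb μ = 0 := by
      have hle : ∀ n, survivalProb μ ≤ ENNReal.ofReal (1 - X n) := by
        intro n
        have h1 : gwGen μ n 0 ≤ extinctionProb μ := le_iSup (fun m => gwGen μ m 0) n
        have h2 : survivalProb μ ≤ 1 - gwGen μ n 0 := by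
          rw [survivalProb]; exact tsub_le_tsub_left h1 1
        rw [hq n, hbridge n] at h2
        rwa [ENNReal.ofReal_sub 1 (hbounds n).1, ENNReal.ofReal_one]
      have ht0 : Filter.Tendsto (fun n => ENNReal.ofReal (1 - X n)) Filter.atTop (nhds 0) := by
        have h1 : Filter.Tendsto (fun n => 1 - X n) Filter.atTop (nhds (0 : ℝ)) := by
          have h2 := Filter.Tendsto.const_sub (1 : ℝ) htend
          simpa [hLeq] using h2
        have h3 := (ENNReal.continuous_ofReal.tendsto 0).comp h1
        simpa [Function.comp_def] using h3
      exact le_antisymm (ge_of_tendsto' ht0 hle) zero_le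
    rw [hsurv]
    exact iff_of_false (lt_irrefl 0) (not_lt.2 hc)
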